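/- Let X be a finite set, P and Q probability distributions on X with full support, ρ > 0, α = 1/(1+ρ), and G_Q : X → {1,…,|X|} a bijection such that G_Q(x) < G_Q(y) implies Q(x) ≥ Q(y). Then (1/ρ)·log(∑_x P(x)·G_Q(x)^ρ) ≤ H_α(P) + I_α(P,Q), where H_α is the Rényi entropy of order α and I_α is Sundaresan's divergence. -/

import Mathlib

open Real Finset

theorem stmt13 {X : Type*} [Fintype X]
    (P Q : X → ℝ) (hP : ∀ x, 0 < P x) (hPsum : ∑ x, P x = 1)
    (hQ : ∀ x, 0 < Q x) (hQsum : ∑ x, Q x = 1)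
    (ρ : ℝ) (hρ : 0 < ρ) (α : ℝ) (hα : α = 1 / (1 + ρ))
    (G : X → ℕ) (hGmem : ∀ x, G x ∈ Finset.Icc 1 (Fintype.card X))
    (hGinj : Function.Injective G)
    (hGmono : ∀ x y, G x < G y → Q y ≤ Q x) :
    (1 / ρ) * Real.logb 2 (∑ x, P x * (G x : ℝ) ^ ρ) ≤
      (1 / (1 - α)) * Real.logb 2 (∑ x, P x ^ α)
      + ((α / (1 - α)) * Real.logb 2
          (∑ x, P x * (∑ x', (Q x' / Q x) ^ α) ^ ((1 - α) / α))
        - (1 / (1 - α)) * Real.logb 2 (∑ x, P x ^ α)) := by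
  have hcancel : ∀ a b : ℝ, a + (b - a) = b := fun a b => by ring
  rw [hcancel]
  have h1ρ : (1:ℝ) + ρ ≠ 0 := by positivity
  have hαpos : 0 < α := by rw [hα]; positivity
  have hfrac : α / (1 - α) = 1 / ρ := by
    rw [hα]; field_simp
    rw [add_sub_cancel_left, div_self hρ.ne']
  have hfrac2 : (1 - α) / α = ρ := by
    rw [hα]; field_simp
    ring
  rw [hfrac, hfrac2]
  rcases isEmpty_or_nonempty X with hX | hX
  · simp
  have himg : Finset.image G Finset.univ = Finset.Icc 1 (Fintype.card X) := by
    apply Finset.eq_of_subset_of_card_le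
    · intro k hk
      obtain ⟨y, _, hy⟩ := Finset.mem_image.mp hk
      exact hy ▸ hGmem y
    · rw [Finset.card_image_of_injective _ hGinj, Nat.card_Icc]
      simp
  have key : ∀ x, (G x : ℝ) ≤ ∑ x', (Q x' / Q x) ^ α := by
    intro x
    set S := Finset.univ.filter (fun y => G y ≤ G x) with hS
    have hcard : G x ≤ S.card := by
      have h1 : Finset.Icc 1 (G x) ⊆ S.image G := by
        intro k hk
        simp only [Finset.mem_Icc] at hk
        have hk' : k ∈ Finset.Icc 1 (Fintype.card X) :=
          Finset.mem_Icc.mpr ⟨hk.1, hk.2.trans (Finset.mem_Icc.mp (hGmem x)).2⟩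
        rw [← himg] at hk'
        obtain ⟨y, _, hy⟩ := Finset.mem_image.mp hk'
        exact Finset.mem_image.mpr ⟨y, Finset.mem_filter.mpr ⟨Finset.mem_univ y, hy ▸ hk.2⟩, hy⟩
      calc G x = (Finset.Icc 1 (G x)).card := by rw [Nat.card_Icc]; omega
        _ ≤ (S.image G).card := Finset.card_le_card h1
        _ ≤ S.card := Finset.card_image_le
    have hQge : ∀ y ∈ S, 1 ≤ (Q y / Q x) ^ α := by
      intro y hy
      have hy' := (Finset.mem_filter.mp hy).2
      have hQyx : Q x ≤ Q y := by
        rcases lt_or_eq_of_le hy' with h | h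
        · exact hGmono y x h
        · rw [hGinj h]
      have hd : 1 ≤ Q y / Q x := (one_le_div (hQ x)).mpr hQyx
      calc (1:ℝ) = 1 ^ α := (Real.one_rpow α).symm
        _ ≤ (Q y / Q x) ^ α := Real.rpow_le_rpow zero_le_one hd hαpos.le
    calc (G x : ℝ) ≤ (S.card : ℝ) := by exact_mod_cast hcard
      _ = ∑ _y ∈ S, (1:ℝ) := by simp
      _ ≤ ∑ y ∈ S, (Q y / Q x) ^ α := Finset.sum_le_sum hQge
      _ ≤ ∑ y, (Q y / Q x) ^ α :=
        Finset.sum_le_sum_of_subset_of_nonneg (Finset.filter_subset _ _)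
          (fun y _ _ => Real.rpow_nonneg (div_nonneg (hQ y).le (hQ x).le) α)
  have hGpos : ∀ x, (0:ℝ) < (G x : ℝ) := by
    intro x
    have := (Finset.mem_Icc.mp (hGmem x)).1
    exact_mod_cast Nat.lt_of_lt_of_le Nat.zero_lt_one this
  have hApos : 0 < ∑ x, P x * (G x : ℝ) ^ ρ := by
    apply Finset.sum_pos
    · intro x _
      exact mul_pos (hP x) (Real.rpow_pos_of_pos (hGpos x) ρ)
    · exact Finset.univ_nonempty
  have hsum_le : (∑ x, P x * (G x : ℝ) ^ ρ) ≤ ∑ x, P x * (∑ x', (Q x' / Q x) ^ α) ^ ρ := by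
    apply Finset.sum_le_sum
    intro x _
    exact mul_le_mul_of_nonneg_left
      (Real.rpow_le_rpow (hGpos x).le (key x) hρ.le) (hP x).le
  have hlog : Real.logb 2 (∑ x, P x * (G x : ℝ) ^ ρ) ≤
      Real.logb 2 (∑ x, P x * (∑ x', (Q x' / Q x) ^ α) ^ ρ) :=
    Real.logb_le_logb_of_le (by norm_num) hApos hsum_le
  exact mul_le_mul_of_nonneg_left hlog (by positivity)
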